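/- Let Q = (q_n)_{n∈ℤ} be a square-summable sequence of real numbers and let N ≥ 1 be an integer. Define Λ_N := {n ∈ ℤ : |q_n| ≥ (1/2)·sup{|q_k| : n − N ≤ k ≤ n + N}}. Then ∑_{n∈Λ_N} q_n² ≥ (3/(32N)) ∑_{n∈ℤ} q_n². -/

import Mathlib

open Function

/-- For a square-summable sequence `(q_n)_{n∈ℤ}` and `N ≥ 1`, the set
`Λ_N = {n : |q_n| ≥ (1/2)·sup_{|k-n|≤N} |q_k|}` carries at least a `3/(32N)`
fraction of the total energy. -/
theorem energy_on_dominant_indices (Q : ℤ → ℝ) (hQ : Summable fun n => Q n ^ 2)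
    (N : ℕ) (hN : 1 ≤ N) :
    (3 / (32 * (N : ℝ))) * ∑' n : ℤ, Q n ^ 2 ≤
      ∑' n : {n : ℤ //
        (1 / 2) * sSup ((fun k => |Q k|) '' Set.Icc (n - (N : ℤ)) (n + (N : ℤ))) ≤ |Q n|},
        Q (n : ℤ) ^ 2 := by
  classical
  have hNpos : (0:ℝ) < N := by exact_mod_cast hN
  set T := ∑' n : ℤ, Q n ^ 2 with hTdef
  have hTnn : 0 ≤ T := tsum_nonneg fun n => sq_nonneg _
  have hbdd : ∀ n : ℤ, Q n ^ 2 ≤ T := fun n => hQ.le_tsum n fun j _ => sq_nonneg _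
  -- choose an argmax of |Q| on each window
  have hne : ∀ n : ℤ, (Finset.Icc (n - (N:ℤ)) (n + (N:ℤ))).Nonempty := by
    intro n
    refine ⟨n, Finset.mem_Icc.mpr ⟨?_, ?_⟩⟩ <;> omega
  choose f hfmem hfmax using fun n : ℤ =>
    Finset.exists_max_image (Finset.Icc (n - (N:ℤ)) (n + (N:ℤ))) (fun k => |Q k|) (hne n)
  have hSup : ∀ n : ℤ,
      sSup ((fun k => |Q k|) '' Set.Icc (n - (N:ℤ)) (n + (N:ℤ))) = |Q (f n)| := by
    intro n
    apply IsGreatest.csSup_eq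
    constructor
    · exact ⟨f n, by simpa [← Finset.coe_Icc] using hfmem n, rfl⟩
    · rintro x ⟨k, hk, rfl⟩
      exact hfmax n k (by simpa [← Finset.coe_Icc] using hk)
  -- the (simplified) dominance predicate
  set P : ℤ → Prop := fun n => 1 / 2 * |Q (f n)| ≤ |Q n| with hPdef
  have hPiff : ∀ n : ℤ,
      ((1 / 2) * sSup ((fun k => |Q k|) '' Set.Icc (n - (N:ℤ)) (n + (N:ℤ))) ≤ |Q n|) ↔ P n := by
    intro n; rw [hSup n]
  have hstep2 : ∀ n : ℤ, ¬ P n → 2 * |Q n| < |Q (f n)| := by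
    intro n hn
    rw [hPdef, not_le] at hn
    linarith
  have hstep : ∀ n : ℤ, ¬ P n → Q n ^ 2 ≤ (1/4 : ℝ) * Q (f n) ^ 2 := by
    intro n hn
    have h2 := hstep2 n hn
    nlinarith [abs_nonneg (Q n), abs_nonneg (Q (f n)), sq_abs (Q n), sq_abs (Q (f n))]
  -- iterating f must reach the dominant set
  have hterm : ∀ n : ℤ, ∃ j : ℕ, P (f^[j] n) := by
    intro n
    by_contra h
    push_neg at h
    have hgrow : ∀ j : ℕ, 2 * |Q (f^[j] n)| < |Q (f^[j+1] n)| := by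
      intro j
      have := hstep2 _ (h j)
      rwa [← Function.iterate_succ_apply' f j n] at this
    have hpos : 0 < |Q (f^[1] n)| :=
      lt_of_le_of_lt (by positivity) (hgrow 0)
    have hgeo : ∀ j : ℕ, 2 ^ j * |Q (f^[1] n)| ≤ |Q (f^[j+1] n)| := by
      intro j
      induction j with
      | zero => simp
      | succ j ih =>
        have h1 := hgrow (j + 1)
        calc 2 ^ (j+1) * |Q (f^[1] n)| = 2 * (2 ^ j * |Q (f^[1] n)|) := by ring
        _ ≤ 2 * |Q (f^[j+1] n)| := by linarith
        _ ≤ |Q (f^[j+2] n)| := (hgrow (j+1)).le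
    obtain ⟨j, hj⟩ := pow_unbounded_of_one_lt (T / |Q (f^[1] n)| ^ 2) (by norm_num : (1:ℝ) < 4)
    have h1 : T < 4 ^ j * |Q (f^[1] n)| ^ 2 := by
      rw [div_lt_iff₀ (by positivity)] at hj
      linarith [hj]
    have h2 : (2 ^ j * |Q (f^[1] n)|) ^ 2 ≤ |Q (f^[j+1] n)| ^ 2 :=
      pow_le_pow_left₀ (by positivity) (hgeo j) 2
    have h3 : |Q (f^[j+1] n)| ^ 2 ≤ T := by rw [sq_abs]; exact hbdd _
    have h4 : (2 ^ j * |Q (f^[1] n)|) ^ 2 = 4 ^ j * |Q (f^[1] n)| ^ 2 := by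
      rw [show (4:ℝ) = 2 * 2 by norm_num, mul_pow 2 2 j]
      ring
    nlinarith [h1, h2, h3, h4]
  set J : ℤ → ℕ := fun n => Nat.find (hterm n) with hJdef
  set τ : ℤ → ℤ := fun n => f^[J n] n with hτdef
  have hτP : ∀ n, P (τ n) := fun n => Nat.find_spec (hterm n)
  have hJmin : ∀ n, ∀ i < J n, ¬ P (f^[i] n) := fun n i hi => Nat.find_min (hterm n) hi
  -- (A) energy decays along the chain
  have key : ∀ (j : ℕ) (n : ℤ), (∀ i < j, ¬ P (f^[i] n)) →
      Q n ^ 2 ≤ (1/4 : ℝ) ^ j * Q (f^[j] n) ^ 2 := by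
    intro j
    induction j with
    | zero => intro n _; simp
    | succ j ih =>
      intro n hn
      have h1 := ih n fun i hi => hn i (Nat.lt_succ_of_lt hi)
      have h2 := hstep _ (hn j (Nat.lt_succ_self j))
      rw [Function.iterate_succ_apply']
      calc Q n ^ 2 ≤ (1/4 : ℝ) ^ j * Q (f^[j] n) ^ 2 := h1
      _ ≤ (1/4 : ℝ) ^ j * ((1/4 : ℝ) * Q (f (f^[j] n)) ^ 2) :=
        mul_le_mul_of_nonneg_left h2 (by positivity)
      _ = (1/4 : ℝ) ^ (j+1) * Q (f (f^[j] n)) ^ 2 := by ring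
  have hA : ∀ n : ℤ, Q n ^ 2 ≤ (1/4 : ℝ) ^ (J n) * Q (τ n) ^ 2 :=
    fun n => key (J n) n (hJmin n)
  -- (B) the chain does not move far
  have hfd : ∀ m : ℤ, m - N ≤ f m ∧ f m ≤ m + N := fun m => Finset.mem_Icc.mp (hfmem m)
  have hBmove : ∀ (j : ℕ) (n : ℤ), n - (N:ℤ) * j ≤ f^[j] n ∧ f^[j] n ≤ n + (N:ℤ) * j := by
    intro j
    induction j with
    | zero => intro n; simp
    | succ j ih =>
      intro n
      have h1 := ih n
      have h2 := hfd (f^[j] n)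
      rw [Function.iterate_succ_apply']
      push_cast
      push_cast at h1
      constructor <;> linarith
  have hdist : ∀ n : ℤ, (n - τ n).natAbs ≤ N * J n := by
    intro n
    have h := hBmove (J n) n
    have h2 : ((n - τ n).natAbs : ℤ) ≤ (N:ℤ) * (J n) := by
      rw [Int.natCast_natAbs, abs_le]
      constructor <;> [linarith [h.2]; linarith [h.1]]
    exact_mod_cast h2
  -- the geometric ratio r = (1/4)^(1/N)
  set r : ℝ := (1/4 : ℝ) ^ ((N : ℝ)⁻¹) with hrdef
  have hr0 : 0 ≤ r := Real.rpow_nonneg (by norm_num) _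
  have hr1 : r < 1 := Real.rpow_lt_one (by norm_num) (by norm_num) (by positivity)
  have hrN : r ^ N = 1/4 := by
    rw [hrdef, ← Real.rpow_natCast ((1/4 : ℝ) ^ ((N : ℝ)⁻¹)) N, ← Real.rpow_mul (by norm_num),
      inv_mul_cancel₀ (ne_of_gt hNpos), Real.rpow_one]
  have hN1 : (1:ℝ) ≤ N := by exact_mod_cast hN
  have hrgap : 3 / (4 * (N:ℝ)) ≤ 1 - r := by
    have hs : r ≤ 1 - 3 / (4 * (N:ℝ)) := by
      have hd1 : 3 / (4 * (N:ℝ)) ≤ 1 := by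
        rw [div_le_one (by positivity)]
        linarith
      have hs0 : (0:ℝ) ≤ 1 - 3 / (4 * (N:ℝ)) := by linarith
      refine le_of_pow_le_pow_left₀ (by omega : N ≠ 0) hs0 ?_
      rw [hrN]
      have hb := one_add_mul_le_pow (a := -(3 / (4 * (N:ℝ)))) (by linarith) N
      have he1 : (1:ℝ) + (N:ℝ) * (-(3 / (4 * (N:ℝ)))) = 1/4 := by
        field_simp
        ring
      have he2 : (1:ℝ) + (-(3 / (4 * (N:ℝ)))) = 1 - 3 / (4 * (N:ℝ)) := by ring
      rw [he1, he2] at hb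
      exact hb
    linarith
  -- combined pointwise bound
  have hAB : ∀ n : ℤ, Q n ^ 2 ≤ r ^ (n - τ n).natAbs * Q (τ n) ^ 2 := by
    intro n
    refine (hA n).trans (mul_le_mul_of_nonneg_right ?_ (sq_nonneg _))
    have h1 : (1/4 : ℝ) ^ (J n) = r ^ (N * J n) := by
      rw [pow_mul, hrN]
    rw [h1]
    exact pow_le_pow_of_le_one hr0 hr1.le (hdist n)
  -- the geometric weight on ℤ
  set b : ℤ → ℝ := fun d => r ^ d.natAbs with hbdef
  have hbnat : ∀ n : ℕ, b n = r ^ n := by intro n; simp [hbdef]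
  have hbneg : ∀ n : ℕ, b (-((n:ℤ)+1)) = r * r ^ n := by
    intro n
    show r ^ ((-((n:ℤ)+1)).natAbs) = r * r ^ n
    rw [show (-((n:ℤ)+1)).natAbs = n + 1 by omega, pow_succ]
    ring
  have hbsum : HasSum b ((1 - r)⁻¹ + r * (1 - r)⁻¹) := by
    refine HasSum.of_nat_of_neg_add_one ?_ ?_
    · simpa [hbnat] using hasSum_geometric_of_lt_one hr0 hr1
    · have := (hasSum_geometric_of_lt_one hr0 hr1).mul_left r
      simpa only [hbneg] using this
  have hbsummable : Summable b := hbsum.summable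
  have hBval : ∑' d : ℤ, b d = (1 - r)⁻¹ + r * (1 - r)⁻¹ := hbsum.tsum_eq
  have h1r : 0 < 1 - r := by linarith
  have hBle : ∑' d : ℤ, b d ≤ 8 * (N:ℝ) / 3 := by
    rw [hBval]
    have hinv : (1 - r)⁻¹ ≤ 4 * (N:ℝ) / 3 := by
      have := inv_anti₀ (by positivity : (0:ℝ) < 3 / (4 * (N:ℝ))) hrgap
      calc (1 - r)⁻¹ ≤ (3 / (4 * (N:ℝ)))⁻¹ := this
      _ = 4 * (N:ℝ) / 3 := by rw [inv_div]
    nlinarith [inv_nonneg.mpr h1r.le, hr0, hr1.le]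
  -- the tsum comparison via the injection n ↦ (τ n, n - τ n)
  set Λ := {n : ℤ //
      (1 / 2) * sSup ((fun k => |Q k|) '' Set.Icc (n - (N : ℤ)) (n + (N : ℤ))) ≤ |Q n|} with hΛdef
  have hΛsummable : Summable fun m : Λ => Q (m : ℤ) ^ 2 := hQ.subtype _
  have hΛnn : 0 ≤ ∑' m : Λ, Q (m : ℤ) ^ 2 := tsum_nonneg fun m => sq_nonneg _
  set g : Λ × ℤ → ℝ := fun p => Q (p.1 : ℤ) ^ 2 * b p.2 with hgdef
  have hgsummable : Summable g :=
    hΛsummable.mul_of_nonneg hbsummable (fun m => sq_nonneg _)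
      (fun d => pow_nonneg hr0 _)
  have hι : ∀ n : ℤ, (1 / 2) * sSup ((fun k => |Q k|) ''
      Set.Icc (τ n - (N : ℤ)) (τ n + (N : ℤ))) ≤ |Q (τ n)| := fun n => (hPiff (τ n)).mpr (hτP n)
  set ι : ℤ → Λ × ℤ := fun n => (⟨τ n, hι n⟩, n - τ n) with hιdef
  have hιinj : Function.Injective ι := by
    intro a c h
    have h1 : τ a = τ c := congrArg (fun p : Λ × ℤ => (p.1 : ℤ)) h
    have h2 : a - τ a = c - τ c := congrArg Prod.snd h
    omega
  have hmain : T ≤ ∑' p : Λ × ℤ, g p := by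
    refine Summable.tsum_le_tsum_of_inj ι hιinj (fun c _ => ?_) (fun n => ?_) hQ hgsummable
    · exact mul_nonneg (sq_nonneg _) (pow_nonneg hr0 _)
    · simpa [hgdef, hιdef, hbdef, mul_comm] using hAB n
  have hprod : ∑' p : Λ × ℤ, g p = (∑' m : Λ, Q (m : ℤ) ^ 2) * (∑' d : ℤ, b d) :=
    (Summable.tsum_mul_tsum hΛsummable hbsummable hgsummable).symm
  have hfinal : T ≤ (∑' m : Λ, Q (m : ℤ) ^ 2) * (8 * (N:ℝ) / 3) := by
    rw [hprod] at hmain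
    exact hmain.trans (mul_le_mul_of_nonneg_left hBle hΛnn)
  rw [div_mul_eq_mul_div, div_le_iff₀ (by positivity)]
  nlinarith [hfinal, hΛnn, hNpos, mul_nonneg hΛnn hNpos.le]
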